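/- Let b be a prime, let m ≥ 1, s ≥ 1 and t be integers with 0 ≤ t ≤ m, and let C_1, …, C_s be m×m matrices over 𝔽_b with ρ_m(C_1,…,C_s) ≥ m − t. Let 0 = w_1 ≤ w_2 ≤ ⋯ ≤ w_s be nonnegative integers with t < w_s < m, and let C̃_1, …, C̃_s be the corresponding row reduced matrices. Then for every choice of nonnegative integers d_1, …, d_s with d_1 + ⋯ + d_s = m − w_s, the collection of row vectors consisting of the first d_j rows of C̃_j for j = 1,…,s is linearly independent over 𝔽_b; consequently ρ_m(C̃_1,…,C̃_s) ≥ m − w_s. -/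
import Mathlib


open scoped BigOperators

/-- Linear independence of the system consisting of the first `d j` rows of each matrix `C j`. -/
def rowsLinIndep (b m : ℕ) {ι : Type*} (C : ι → Matrix (Fin m) (Fin m) (ZMod b))
    (d : ι → ℕ) : Prop :=
  LinearIndependent (ZMod b)
    (fun p : {p : ι × Fin m // (p.2 : ℕ) < d p.1} => C p.1.1 p.1.2)

/-- The linear independence parameter `ρ_m(C_1,…,C_s)`: the largest `d ∈ {0,…,m}` such that
for every choice of nonnegative integers `d_j` summing to `d`, the collection of the first `d_j`
rows of the matrices is linearly independent. -/
noncomputable def rho (b m : ℕ) {ι : Type*} [Fintype ι]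
    (C : ι → Matrix (Fin m) (Fin m) (ZMod b)) : ℕ :=
  sSup {d | d ≤ m ∧ ∀ dv : ι → ℕ, (∑ j, dv j) = d → rowsLinIndep b m C dv}

/-- Row reduced matrix: the last `min m w` rows are set to zero. -/
def rowReduced {b m : ℕ} (C : Matrix (Fin m) (Fin m) (ZMod b)) (w : ℕ) :
    Matrix (Fin m) (Fin m) (ZMod b) :=
  Matrix.of fun i r => if (i : ℕ) < m - min m w then C i r else 0

/-- Column-row reduced matrix: the last `min m w` rows and columns are set to zero. -/
def colRowReduced {b m : ℕ} (C : Matrix (Fin m) (Fin m) (ZMod b)) (w : ℕ) :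
    Matrix (Fin m) (Fin m) (ZMod b) :=
  Matrix.of fun i r => if (i : ℕ) < m - min m w ∧ (r : ℕ) < m - min m w then C i r else 0

/-- Reduced matrix with possibly different row/column reduction indices. -/
def colRowReduced' {b m : ℕ} (C : Matrix (Fin m) (Fin m) (ZMod b)) (wr wc : ℕ) :
    Matrix (Fin m) (Fin m) (ZMod b) :=
  Matrix.of fun i r => if (i : ℕ) < m - min m wr ∧ (r : ℕ) < m - min m wc then C i r else 0

/-- Upper-left `m × m` submatrix of an infinite matrix. -/
def upperLeft {b : ℕ} (C : Matrix ℕ ℕ (ZMod b)) (m : ℕ) : Matrix (Fin m) (Fin m) (ZMod b) :=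
  Matrix.of fun i r => C (i : ℕ) (r : ℕ)

/-- The `k`-th coordinate value produced by the digital method with generating matrix `C`. -/
noncomputable def digitalPoint (b m : ℕ) (C : Matrix (Fin m) (Fin m) (ZMod b)) (k : ℕ) : ℝ :=
  ∑ i : Fin m,
    ((C.mulVec fun r : Fin m => ((k / b ^ (r : ℕ)) % b : ZMod b)) i).val
      / (b : ℝ) ^ ((i : ℕ) + 1)

open Classical in
/-- The `b^m` points `P 0, …, P (b^m - 1)` form a `(t,m,|ι|)`-net in base `b` (counted with
multiplicity): every elementary interval of volume `b^(t-m)` contains exactly `b^t` points. -/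
def isNet (b m t : ℕ) {ι : Type*} [Fintype ι] (P : ℕ → ι → ℝ) : Prop :=
  ∀ d a : ι → ℕ, (∀ j, a j < b ^ d j) → (∑ j, d j) = m - t →
    ((Finset.range (b ^ m)).filter fun k =>
        ∀ j, (a j : ℝ) / (b : ℝ) ^ d j ≤ P k j ∧ P k j < ((a j : ℝ) + 1) / (b : ℝ) ^ d j).card
      = b ^ t

lemma rowsLinIndep_mono {b m : ℕ} {ι : Type*} (C : ι → Matrix (Fin m) (Fin m) (ZMod b))
    {d d' : ι → ℕ} (h : ∀ j, d j ≤ d' j) (hli : rowsLinIndep b m C d') :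
    rowsLinIndep b m C d := by
  exact hli.comp
    (fun p : {p : ι × Fin m // (p.2 : ℕ) < d p.1} =>
      (⟨p.1, lt_of_lt_of_le p.2 (h p.1.1)⟩ : {p : ι × Fin m // (p.2 : ℕ) < d' p.1}))
    (by intro p q hpq; simpa [Subtype.ext_iff] using hpq)

lemma rowsLinIndep_zero {b m : ℕ} {ι : Type*} (C : ι → Matrix (Fin m) (Fin m) (ZMod b)) :
    rowsLinIndep b m C (fun _ => 0) := by
  have : IsEmpty {p : ι × Fin m // (p.2 : ℕ) < (fun _ => (0:ℕ)) p.1} :=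
    ⟨fun p => Nat.not_lt_zero _ p.2⟩
  exact linearIndependent_empty_type

/-- if `t < w_s < m`, then for every choice of `d_1,…,d_s ≥ 0` with
`d_1 + ⋯ + d_s = m − w_s`, the collection of the first `d_j` rows of the row reduced matrices
is linearly independent; consequently `ρ_m(C̃_1,…,C̃_s) ≥ m − w_s`. -/
theorem rowsLinIndep_rowReduced_of_lt (b m s t : ℕ) (hb : Nat.Prime b) (hm : 1 ≤ m)
    (hs : 1 ≤ s) (ht : t ≤ m) (C : Fin s → Matrix (Fin m) (Fin m) (ZMod b))
    (hrho : m - t ≤ rho b m C)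
    (w : Fin s → ℕ) (hw1 : w ⟨0, hs⟩ = 0) (hwmono : Monotone w)
    (hws_gt : t < w ⟨s - 1, by omega⟩) (hws_lt : w ⟨s - 1, by omega⟩ < m) :
    (∀ dv : Fin s → ℕ, (∑ j, dv j) = m - w ⟨s - 1, by omega⟩ →
        rowsLinIndep b m (fun j => rowReduced (C j) (w j)) dv) ∧
      m - w ⟨s - 1, by omega⟩ ≤ rho b m (fun j => rowReduced (C j) (w j)) := by
  classical
  set js : Fin s := ⟨s - 1, by omega⟩ with hjs
  have hwj : ∀ j : Fin s, w j ≤ w js := by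
    intro j
    exact hwmono (by have := j.isLt; exact Fin.mk_le_of_le_val (by simp [hjs]; omega))
  -- the set defining rho for C
  set S : Set ℕ := {d | d ≤ m ∧ ∀ dv : Fin s → ℕ, (∑ j, dv j) = d → rowsLinIndep b m C dv}
    with hS
  have h0S : (0 : ℕ) ∈ S := by
    refine ⟨Nat.zero_le _, fun dv hdv => ?_⟩
    have hdv0 : dv = fun _ => 0 := by
      funext j
      have := Finset.sum_eq_zero_iff.mp hdv j (Finset.mem_univ j)
      exact this
    rw [hdv0]
    exact rowsLinIndep_zero C
  have hbdd : BddAbove S := ⟨m, fun x hx => hx.1⟩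
  have hmem : rho b m C ∈ S := by
    rw [rho]
    exact Nat.sSup_mem ⟨0, h0S⟩ hbdd
  have hrle : m - w js ≤ rho b m C := by omega
  -- key: linear independence for the original matrices
  have hkey : ∀ dv : Fin s → ℕ, (∑ j, dv j) = m - w js → rowsLinIndep b m C dv := by
    intro dv hdv
    set j0 : Fin s := ⟨0, hs⟩
    set dv' : Fin s → ℕ := Function.update dv j0 (dv j0 + (rho b m C - (m - w js))) with hdv'
    have hsum' : (∑ j, dv' j) = rho b m C := by
      rw [hdv', Finset.sum_update_of_mem (Finset.mem_univ j0), ← Finset.erase_eq]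
      have h2 : (∑ j, dv j) = dv j0 + ∑ j ∈ Finset.univ.erase j0, dv j :=
        (Finset.add_sum_erase _ _ (Finset.mem_univ j0)).symm
      omega
    have hli' : rowsLinIndep b m C dv' := hmem.2 dv' hsum'
    refine rowsLinIndep_mono C (fun j => ?_) hli'
    rw [hdv']
    by_cases hj : j = j0
    · subst hj; simp
    · rw [Function.update_of_ne hj]
  refine ⟨?_, ?_⟩
  · intro dv hdv
    have hdvle : ∀ j, dv j ≤ m - w js := by
      intro j
      have := Finset.single_le_sum (f := dv) (fun i _ => Nat.zero_le _) (Finset.mem_univ j)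
      omega
    have heq : (fun p : {p : Fin s × Fin m // (p.2 : ℕ) < dv p.1} =>
        rowReduced (C p.1.1) (w p.1.1) p.1.2) = fun p => C p.1.1 p.1.2 := by
      funext p
      have h1 : (p.1.2 : ℕ) < m - min m (w p.1.1) := by
        have h2 := hdvle p.1.1
        have h3 := hwj p.1.1
        have h4 := p.2
        have : min m (w p.1.1) = w p.1.1 := min_eq_right (by omega)
        omega
      funext r
      simp [rowReduced, h1]
    rw [rowsLinIndep, heq]
    exact hkey dv hdv
  · apply le_csSup ⟨m, fun x hx => hx.1⟩
    refine ⟨by omega, ?_⟩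
    intro dv hdv
    have hdvle : ∀ j, dv j ≤ m - w js := by
      intro j
      have := Finset.single_le_sum (f := dv) (fun i _ => Nat.zero_le _) (Finset.mem_univ j)
      omega
    have heq : (fun p : {p : Fin s × Fin m // (p.2 : ℕ) < dv p.1} =>
        rowReduced (C p.1.1) (w p.1.1) p.1.2) = fun p => C p.1.1 p.1.2 := by
      funext p
      have h1 : (p.1.2 : ℕ) < m - min m (w p.1.1) := by
        have h2 := hdvle p.1.1
        have h3 := hwj p.1.1
        have h4 := p.2
        have : min m (w p.1.1) = w p.1.1 := min_eq_right (by omega)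
        omega
      funext r
      simp [rowReduced, h1]
    rw [rowsLinIndep, heq]
    exact hkey dv hdv
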